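/- arXiv:2601.23040 — 9 statements merged into one kernel-verified Lean document; each statement's English description precedes it below -/
import Mathlib

section
/- Let X be a complex Hilbert space, J a skew-adjoint operator and H a bounded self-adjoint operator on X, and set L = JH. If f is an eigenvector of L with eigenvalue λ satisfying Re(λ) ≠ 0, then ⟨H f, f⟩ = 0. -/
/-- For a Hamiltonian operator `L = J H` on a complex Hilbert space, with `J` skew-adjoint
and `H` bounded self-adjoint, any eigenvector of `L` whose eigenvalue has nonzero real part
is isotropic for the quadratic form of `H`. -/
theorem stmt_0 {X : Type*} [NormedAddCommGroup X] [InnerProductSpace ℂ X] [CompleteSpace X]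
    (J : X →ₗ[ℂ] X) (H : X →L[ℂ] X)
    (hJ : ∀ f g : X, (inner ℂ (J f) g : ℂ) = -inner ℂ f (J g))
    (hH : ∀ f g : X, (inner ℂ (H f) g : ℂ) = inner ℂ f (H g))
    (f : X) (μ : ℂ) (hf : f ≠ 0)
    (heig : J (H f) = μ • f) (hμ : μ.re ≠ 0) :
    (inner ℂ (H f) f : ℂ) = 0 := by
  set a : ℂ := inner ℂ (H f) f with ha
  have h1 : (inner ℂ (H f) (J (H f)) : ℂ) = μ * a := by
    rw [heig, inner_smul_right]
  have h2 : (inner ℂ (J (H f)) (H f) : ℂ) = (starRingEnd ℂ) μ * a := by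
    rw [heig, inner_smul_left, ← hH]
  have h3 := hJ (H f) (H f)
  rw [h1, h2] at h3
  have h4 : (μ + (starRingEnd ℂ) μ) * a = 0 := by ring_nf; linear_combination h3
  have h5 : μ + (starRingEnd ℂ) μ ≠ 0 := by
    simp [Complex.ext_iff, Complex.add_re]
    intro h
    exact absurd (by linarith [h] : μ.re = 0) hμ
  exact (mul_eq_zero.mp h4).resolve_left h5
end

section
/- Let X be a Hilbert space, L = JH a Hamiltonian operator where H is bounded self-adjoint with exactly k negative eigenvalues (counted with multiplicity), and suppose L has m linearly independent eigenvectors whose eigenvalues have strictly positive real part. Then m ≤ k. In particular if H has no negative eigenvalues, the spectrum of L off the imaginary axis contains no eigenvalues. -/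
/-- If the bounded self-adjoint operator `H` has exactly `k` negative eigenvalues (i.e. every
finite-dimensional subspace on which the quadratic form of `H` is negative definite has
dimension at most `k`), then the Hamiltonian operator `L = J H` has at most `k` linearly
independent eigenvectors whose eigenvalues have strictly positive real part. -/
theorem stmt_2 {X : Type*} [NormedAddCommGroup X] [InnerProductSpace ℂ X] [CompleteSpace X]
    (J : X →ₗ[ℂ] X) (H : X →L[ℂ] X)
    (hJ : ∀ f g : X, (inner ℂ (J f) g : ℂ) = -inner ℂ f (J g))
    (hH : ∀ f g : X, (inner ℂ (H f) g : ℂ) = inner ℂ f (H g))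
    (k m : ℕ)
    (hneg : ∀ V : Submodule ℂ X, FiniteDimensional ℂ V →
      (∀ v ∈ V, v ≠ 0 → ((inner ℂ (H v) v : ℂ)).re < 0) → Module.finrank ℂ V ≤ k)
    (f : Fin m → X) (μ : Fin m → ℂ)
    (hind : LinearIndependent ℂ f)
    (heig : ∀ i, J (H (f i)) = μ i • f i)
    (hre : ∀ i, 0 < (μ i).re) :
    m ≤ k := by
  classical
  -- Step 1: pairwise orthogonality w.r.t. the H-form
  have horth : ∀ i j, (inner ℂ (H (f i)) (f j) : ℂ) = 0 := by
    intro i j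
    have h1 : (inner ℂ (H (J (H (f i)))) (f j) : ℂ) = - inner ℂ (H (f i)) (J (H (f j))) := by
      rw [hH]; exact hJ _ _
    rw [heig i, heig j] at h1
    rw [map_smul, inner_smul_left, inner_smul_right] at h1
    have h4 : ((starRingEnd ℂ) (μ i) + μ j) * inner ℂ (H (f i)) (f j) = 0 := by
      rw [add_mul, h1]; ring
    have h5 : (starRingEnd ℂ) (μ i) + μ j ≠ 0 := by
      intro h
      have := congrArg Complex.re h
      simp [Complex.add_re, Complex.conj_re] at this
      nlinarith [hre i, hre j]
    exact (mul_eq_zero.mp h4).resolve_left h5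
  -- combinations
  set s : (Fin m → ℂ) → X := fun c => ∑ i, c i • f i with hs
  have hHs : ∀ c d : Fin m → ℂ, (inner ℂ (H (s c)) (s d) : ℂ) = 0 := by
    intro c d
    simp only [hs, map_sum, map_smul, sum_inner, inner_sum, inner_smul_left,
      inner_smul_right, horth, mul_zero, Finset.sum_const_zero]
  have hker : ∀ c : Fin m → ℂ, H (s c) = 0 → c = 0 := by
    intro c hc
    have h0 : J (H (s c)) = 0 := by rw [hc, map_zero]
    have h1 : ∑ i, (c i * μ i) • f i = 0 := by
      rw [hs] at h0
      simp only [map_sum, map_smul, heig, smul_smul] at h0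
      exact h0
    have h2 := linearIndependent_iff'.mp hind Finset.univ _ h1
    funext i
    have := h2 i (Finset.mem_univ i)
    have hμ : μ i ≠ 0 := by
      intro h; have := hre i; rw [h] at this; simp at this
    simpa [hμ] using mul_eq_zero.mp this
  -- choose t
  set t : ℝ := 1 / (‖H‖ + 1) with ht
  have hHnn : (0:ℝ) ≤ ‖H‖ := norm_nonneg _
  have ht0 : 0 < t := by positivity
  have htH : t * ‖H‖ < 2 := by
    rw [ht, div_mul_eq_mul_div, one_mul, div_lt_iff₀ (by linarith)]
    nlinarith
  -- quadratic form on perturbed vectors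
  have hquad : ∀ c : Fin m → ℂ, c ≠ 0 →
      ((inner ℂ (H (s c - (t:ℂ) • H (s c))) (s c - (t:ℂ) • H (s c)) : ℂ)).re < 0 := by
    intro c hc0
    set x := s c with hx
    have hHx : H x ≠ 0 := by
      intro h
      exact hc0 (hker c h)
    have hexp : (inner ℂ (H (x - (t:ℂ) • H x)) (x - (t:ℂ) • H x) : ℂ)
        = - (2 * t) * (‖H x‖^2 : ℝ) + ((t:ℂ))^2 * inner ℂ (H (H x)) (H x) := by
      have e1 : (inner ℂ (H x) x : ℂ) = 0 := hHs c c
      have e2 : (inner ℂ (H (H x)) x : ℂ) = inner ℂ (H x) (H x) := hH _ _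
      have e3 : (inner ℂ (H x) (H x) : ℂ) = (‖H x‖^2 : ℝ) := by
        rw [inner_self_eq_norm_sq_to_K]; norm_num
      rw [map_sub, map_smul, inner_sub_left, inner_sub_right, inner_sub_right,
        inner_smul_left, inner_smul_right, inner_smul_left, inner_smul_right,
        e1, e2, e3]
      simp [Complex.conj_ofReal]
      ring
    rw [hexp]
    have hre2 : ((inner ℂ (H (H x)) (H x) : ℂ)).re ≤ ‖H‖ * ‖H x‖^2 := by
      calc ((inner ℂ (H (H x)) (H x) : ℂ)).re ≤ ‖(inner ℂ (H (H x)) (H x) : ℂ)‖ :=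
            Complex.re_le_norm _
        _ ≤ ‖H (H x)‖ * ‖H x‖ := norm_inner_le_norm _ _
        _ ≤ (‖H‖ * ‖H x‖) * ‖H x‖ := by
            have := H.le_opNorm (H x)
            nlinarith [norm_nonneg (H x)]
        _ = ‖H‖ * ‖H x‖^2 := by ring
    have hnx : 0 < ‖H x‖ := norm_pos_iff.mpr hHx
    have e4 : (-(2 * (t:ℂ)) * ((‖H x‖^2 : ℝ):ℂ) + ((t:ℂ))^2 * inner ℂ (H (H x)) (H x)).re
        = -(2*t)*‖H x‖^2 + t^2 * ((inner ℂ (H (H x)) (H x) : ℂ)).re := by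
      rw [show ((t:ℂ))^2 = ((t^2 : ℝ):ℂ) by push_cast; ring,
        show -(2*(t:ℂ)) = ((-(2*t) : ℝ):ℂ) by push_cast; ring,
        ← Complex.ofReal_mul, Complex.add_re, Complex.ofReal_re, Complex.re_ofReal_mul]
    rw [e4]
    nlinarith [mul_le_mul_of_nonneg_left hre2 (sq_nonneg t), sq_nonneg ‖H x‖,
      mul_pos ht0 (mul_pos hnx hnx), mul_pos ht0 ht0]
  -- perturbed vectors
  set g : Fin m → X := fun i => f i - (t:ℂ) • H (f i) with hg
  have hsum : ∀ c : Fin m → ℂ, ∑ i, c i • g i = s c - (t:ℂ) • H (s c) := by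
    intro c
    simp only [hg, hs, smul_sub, Finset.sum_sub_distrib, map_sum, map_smul, smul_comm (c _),
      Finset.smul_sum]
  have hgind : LinearIndependent ℂ g := by
    rw [Fintype.linearIndependent_iff]
    intro c hc
    by_contra hne
    have hc0 : c ≠ 0 := by
      intro h; apply hne; intro i; rw [h]; rfl
    have := hquad c hc0
    rw [← hsum, hc] at this
    simp at this
  set V := Submodule.span ℂ (Set.range g) with hV
  have hfd : FiniteDimensional ℂ V := FiniteDimensional.span_of_finite ℂ (Set.finite_range g)
  have hVneg : ∀ v ∈ V, v ≠ 0 → ((inner ℂ (H v) v : ℂ)).re < 0 := by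
    intro v hv hv0
    obtain ⟨c, hc⟩ := (Submodule.mem_span_range_iff_exists_fun ℂ).mp hv
    have hc0 : c ≠ 0 := by
      intro h
      apply hv0
      rw [← hc, h]
      simp
    rw [← hc, hsum]
    exact hquad c hc0
  have hrank := hneg V hfd hVneg
  have : Module.finrank ℂ V = m := by
    rw [hV, finrank_span_eq_card hgind, Fintype.card_fin]
  omega
end

section
/- Let T be a skew-adjoint operator on a Hilbert space X and λ ∈ ℂ with Re(λ) > 0, with resolvent R = (T - λ)⁻¹. Let v, v*, u₀, u₀* ∈ X, and set r = v - (T - λ)u₀ and r* = v* - (T - λ)* u₀*. Then |⟨Rv, v*⟩ - (⟨u₀, v*⟩ + ⟨r, u₀*⟩)| ≤ ‖r‖ ‖r*‖ / Re(λ). -/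
/-- Primal-dual error bound: for a skew-adjoint `T`, `Re λ > 0`, and `R = (T - λ)⁻¹`, with
residuals `r = v - (T - λ)u₀` and `r* = v* - (T - λ)* u₀*` (where `(T - λ)* = -T - conj λ`),
one has `|⟨Rv, v*⟩ - (⟨u₀, v*⟩ + ⟨r, u₀*⟩)| ≤ ‖r‖ ‖r*‖ / Re λ`. -/
theorem stmt_5 {X : Type*} [NormedAddCommGroup X] [InnerProductSpace ℂ X] [CompleteSpace X]
    (T : X →L[ℂ] X)
    (hT : ∀ f g : X, (inner ℂ (T f) g : ℂ) = -inner ℂ f (T g))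
    (l : ℂ) (hl : 0 < l.re)
    (R : X →L[ℂ] X)
    (hR1 : ∀ f, T (R f) - l • R f = f) (hR2 : ∀ f, R (T f - l • f) = f)
    (v vs u₀ us : X)
    (r rs : X)
    (hr : r = v - (T u₀ - l • u₀))
    (hrs : rs = vs - (-(T us) - (starRingEnd ℂ) l • us)) :
    ‖(inner ℂ (R v) vs : ℂ) - ((inner ℂ u₀ vs : ℂ) + (inner ℂ r us : ℂ))‖
      ≤ ‖r‖ * ‖rs‖ / l.re := by
  -- purely imaginary diagonal
  have him : ∀ g : X, (inner ℂ (T g) g : ℂ).re = 0 := by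
    intro g
    have h1 := congrArg Complex.re (hT g g)
    have h4 := congrArg Complex.re (inner_conj_symm (𝕜 := ℂ) g (T g))
    simp only [Complex.neg_re, Complex.conj_re] at h1 h4
    linarith
  -- resolvent bound
  have hbound : ∀ f : X, l.re * ‖R f‖ ≤ ‖f‖ := by
    intro f
    set g := R f with hg
    have hfg : f = T g - l • g := (hR1 f).symm
    have hre : (inner ℂ f g : ℂ).re = -(l.re * ‖g‖ ^ 2) := by
      have hgg : (inner ℂ g g : ℂ) = ((‖g‖ ^ 2 : ℝ) : ℂ) := by
        rw [inner_self_eq_norm_sq_to_K]; norm_cast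
      rw [hfg, inner_sub_left, inner_smul_left, hgg, Complex.sub_re, Complex.mul_re, him g]
      simp [← Complex.ofReal_pow]
    have habs : l.re * ‖g‖ ^ 2 ≤ ‖f‖ * ‖g‖ := by
      have h1 : l.re * ‖g‖ ^ 2 ≤ ‖(inner ℂ f g : ℂ)‖ := by
        have := Complex.abs_re_le_norm (inner ℂ f g : ℂ)
        rw [hre, abs_neg] at this
        exact le_trans (le_abs_self _) this
      refine h1.trans ?_
      exact norm_inner_le_norm f g
    rcases eq_or_lt_of_le (norm_nonneg g) with h0 | h0
    · rw [← h0]; simp [← h0]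
    · have := mul_le_mul_of_nonneg_right habs (le_of_lt (inv_pos.mpr h0))
      calc l.re * ‖g‖ = l.re * ‖g‖ ^ 2 * ‖g‖⁻¹ := by field_simp
        _ ≤ ‖f‖ * ‖g‖ * ‖g‖⁻¹ := this
        _ = ‖f‖ := by field_simp
  -- decomposition
  have hRv : R v = u₀ + R r := by
    have hv : v = (T u₀ - l • u₀) + r := by rw [hr]; abel
    rw [hv, map_add, hR2]
  have hvs : vs = (-(T us) - (starRingEnd ℂ) l • us) + rs := by rw [hrs]; abel
  have hkey : (inner ℂ (R v) vs : ℂ) - ((inner ℂ u₀ vs : ℂ) + (inner ℂ r us : ℂ))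
      = inner ℂ (R r) rs := by
    have h1 : (inner ℂ (R r) (-(T us) - (starRingEnd ℂ) l • us) : ℂ) = inner ℂ r us := by
      have h2 : (inner ℂ (T (R r) - l • R r) us : ℂ) = inner ℂ r us := by rw [hR1]
      rw [inner_sub_left, inner_smul_left, hT] at h2
      rw [inner_sub_right, inner_neg_right, inner_smul_right]
      linear_combination h2
    have h4 : (inner ℂ (R r) vs : ℂ) = inner ℂ r us + inner ℂ (R r) rs := by
      rw [hvs, inner_add_right, h1]
    rw [hRv, inner_add_left, h4]
    ring
  rw [hkey]
  have h2 : ‖(inner ℂ (R r) rs : ℂ)‖ ≤ ‖R r‖ * ‖rs‖ := by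
    exact norm_inner_le_norm (R r) rs
  have h3 : ‖R r‖ ≤ ‖r‖ / l.re := by
    rw [le_div_iff₀ hl]
    linarith [hbound r]
  calc ‖(inner ℂ (R r) rs : ℂ)‖ ≤ ‖R r‖ * ‖rs‖ := h2
    _ ≤ (‖r‖ / l.re) * ‖rs‖ := mul_le_mul_of_nonneg_right h3 (norm_nonneg rs)
    _ = ‖r‖ * ‖rs‖ / l.re := by ring
end

section
/- For h ∈ (0,1), the line integral of sin(x) over the Taylor–Green streamline, namely 4∫_{arcsin h}^{π/2} sin(x)/√(sin²x - h²) dx, equals 2π. -/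
open Real

/-- The line integral of `sin x` over the Taylor–Green streamline `{sin x sin y = h}`:
`4 ∫_{arcsin h}^{π/2} sin x / √(sin²x - h²) dx = 2π` for every `h ∈ (0,1)`. -/
theorem stmt_10 (h : ℝ) (hh : h ∈ Set.Ioo (0 : ℝ) 1) :
    4 * ∫ x in Real.arcsin h..(Real.pi / 2),
        Real.sin x / Real.sqrt (Real.sin x ^ 2 - h ^ 2) = 2 * Real.pi := by
  obtain ⟨h0, h1⟩ := hh
  set c : ℝ := Real.sqrt (1 - h ^ 2) with hc
  have hc0 : 0 < c := Real.sqrt_pos.mpr (by nlinarith)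
  set F : ℝ → ℝ := fun x => -Real.arcsin (Real.cos x / c) with hF
  set a := Real.arcsin h with ha
  set b := Real.pi / 2 with hb
  have hab : a ≤ b := Real.arcsin_le_pi_div_two h
  have ha0 : 0 < a := Real.arcsin_pos.mpr h0
  have hcos_a : Real.cos a = c := Real.cos_arcsin h
  -- key facts on the open interval
  have hkey : ∀ x ∈ Set.Ioo a b,
      HasDerivAt F (Real.sin x / Real.sqrt (Real.sin x ^ 2 - h ^ 2)) x := by
    intro x hx
    have hx1 : a < x := hx.1
    have hx2 : x < b := hx.2
    have hcospos : 0 < Real.cos x := Real.cos_pos_of_mem_Ioo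
      ⟨by linarith [Real.pi_pos], hx2⟩
    have hcoslt : Real.cos x < c := by
      rw [← hcos_a]
      exact Real.cos_lt_cos_of_nonneg_of_le_pi ha0.le
        (by linarith [Real.pi_pos]) hx1
    have hu1 : Real.cos x / c < 1 := (div_lt_one hc0).mpr hcoslt
    have hu0 : 0 < Real.cos x / c := div_pos hcospos hc0
    have hd1 : HasDerivAt (fun y : ℝ => Real.cos y / c) (-Real.sin x / c) x :=
      (Real.hasDerivAt_cos x).div_const c
    have hd2 : HasDerivAt Real.arcsin
        (1 / Real.sqrt (1 - (Real.cos x / c) ^ 2)) (Real.cos x / c) :=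
      Real.hasDerivAt_arcsin (by linarith) (ne_of_lt hu1)
    have hd := (hd2.comp x hd1).neg
    convert hd using 1
    case e'_4 => rfl
    case e'_5 => rfl
    case e'_8 => rfl
    have hsq : 1 - (Real.cos x / c) ^ 2 = (Real.sin x ^ 2 - h ^ 2) / c ^ 2 := by
      have hc2 : c ^ 2 = 1 - h ^ 2 := Real.sq_sqrt (by nlinarith)
      field_simp
      nlinarith [Real.sin_sq_add_cos_sq x]
    have hpos : 0 < Real.sin x ^ 2 - h ^ 2 := by
      have h2 : (0:ℝ) < 1 - (Real.cos x / c) ^ 2 := by nlinarith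
      rw [hsq] at h2
      have he : Real.sin x ^ 2 - h ^ 2
          = ((Real.sin x ^ 2 - h ^ 2) / c ^ 2) * c ^ 2 := by field_simp
      exact he ▸ mul_pos h2 (pow_pos hc0 2)
    rw [hsq, Real.sqrt_div hpos.le, Real.sqrt_sq hc0.le]
    have hs0 : 0 < Real.sqrt (Real.sin x ^ 2 - h ^ 2) := Real.sqrt_pos.mpr hpos
    field_simp
  have hpos : ∀ x ∈ Set.Ioo a b, 0 ≤ Real.sin x / Real.sqrt (Real.sin x ^ 2 - h ^ 2) := by
    intro x hx
    have : 0 ≤ Real.sin x := Real.sin_nonneg_of_nonneg_of_le_pi (by linarith [hx.1])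
      (by linarith [hx.2, Real.pi_pos])
    positivity
  have hcont : ContinuousOn F (Set.Icc a b) :=
    (Real.continuous_arcsin.comp (Real.continuous_cos.div_const c)).neg.continuousOn
  have hint : IntervalIntegrable
      (fun x => Real.sin x / Real.sqrt (Real.sin x ^ 2 - h ^ 2)) MeasureTheory.volume a b := by
    apply intervalIntegral.intervalIntegrable_deriv_of_nonneg
    · rwa [Set.uIcc_of_le hab]
    · rwa [min_eq_left hab, max_eq_right hab]
    · rwa [min_eq_left hab, max_eq_right hab]
  have := intervalIntegral.integral_eq_sub_of_hasDeriv_right_of_le hab hcont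
    (fun x hx => (hkey x hx).hasDerivWithinAt) hint
  rw [this]
  have hFb : F b = 0 := by
    simp [hF, hb, Real.cos_pi_div_two]
  have hFa : F a = -(Real.pi / 2) := by
    simp [hF, hcos_a, div_self hc0.ne', Real.arcsin_one]
  rw [hFb, hFa]
  ring
end

section
/- For h ∈ (0,1), the period function T(h) = 4∫_{arcsin h}^{π/2} dx/√(sin²x - h²) satisfies T(h) = 4∫_0^{π/2} ds/√(1 - (1-h²) sin² s), i.e. it equals 2π divided by the arithmetic–geometric mean M(1,h). -/
/-- The arithmetic–geometric mean iteration: `a_{n+1} = (a_n + b_n)/2`, `b_{n+1} = √(a_n b_n)`. -/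
noncomputable def agmPair (a b : ℝ) : ℕ → ℝ × ℝ
  | 0 => (a, b)
  | n + 1 =>
      (((agmPair a b n).1 + (agmPair a b n).2) / 2,
        Real.sqrt ((agmPair a b n).1 * (agmPair a b n).2))

/-- The arithmetic–geometric mean `M(a,b)`, the common limit of the AGM iteration. -/
noncomputable def agm (a b : ℝ) : ℝ :=
  Filter.limUnder Filter.atTop fun n => (agmPair a b n).1


open Real MeasureTheory Set Filter Topology

namespace Stmt11

noncomputable def J (a b : ℝ) : ℝ := ∫ t in Ioi (0:ℝ), 1 / Real.sqrt ((a^2 + t^2) * (b^2 + t^2))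

lemma sq_add_sq_pos {a : ℝ} (ha : 0 < a) (t : ℝ) : 0 < a^2 + t^2 := by positivity

lemma Jcont {a b : ℝ} (ha : 0 < a) (hb : 0 < b) :
    Continuous fun t : ℝ => 1 / Real.sqrt ((a^2+t^2)*(b^2+t^2)) := by
  apply Continuous.div continuous_const
  · exact (continuous_const.add (continuous_id.pow 2)).mul
      (continuous_const.add (continuous_id.pow 2)) |>.sqrt
  · intro t
    have := sq_add_sq_pos ha t
    have := sq_add_sq_pos hb t
    positivity

lemma min_sq_le {a : ℝ} (ha : 0 < a) (t : ℝ) : (min a 1)^2 * (1 + t^2) ≤ a^2 + t^2 := by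
  rcases le_total a 1 with h | h
  · rw [min_eq_left h]
    have h2 : a^2 ≤ 1 := by nlinarith
    nlinarith [mul_le_mul_of_nonneg_right h2 (sq_nonneg t)]
  · rw [min_eq_right h]; nlinarith [sq_nonneg t]

lemma Jintegrable {a b : ℝ} (ha : 0 < a) (hb : 0 < b) :
    Integrable (fun t : ℝ => 1 / Real.sqrt ((a^2+t^2)*(b^2+t^2))) := by
  set m := min a 1 * min b 1 with hm
  have hmpos : 0 < m := by have := lt_min ha one_pos; have := lt_min hb one_pos; positivity
  apply Integrable.mono' ((integrable_inv_one_add_sq).const_mul m⁻¹)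
    ((Jcont ha hb).aestronglyMeasurable)
  filter_upwards with t
  have h1 : (min a 1)^2 * (1 + t^2) ≤ a^2 + t^2 := min_sq_le ha t
  have h2 : (min b 1)^2 * (1 + t^2) ≤ b^2 + t^2 := min_sq_le hb t
  have hma : 0 < min a 1 := lt_min ha one_pos
  have hmb : 0 < min b 1 := lt_min hb one_pos
  have ht : (0:ℝ) < 1 + t^2 := by positivity
  have key : m * (1 + t^2) ≤ Real.sqrt ((a^2+t^2)*(b^2+t^2)) := by
    rw [show m * (1+t^2) = Real.sqrt ((m * (1+t^2))^2) from (Real.sqrt_sq (by positivity)).symm]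
    apply Real.sqrt_le_sqrt
    have : (m * (1+t^2))^2 = ((min a 1)^2 * (1+t^2)) * ((min b 1)^2 * (1+t^2)) := by ring
    rw [this]
    apply mul_le_mul h1 h2 (by positivity) (by positivity)
  rw [Real.norm_eq_abs, abs_of_nonneg (by positivity)]
  have hle : 1 / Real.sqrt ((a^2+t^2)*(b^2+t^2)) ≤ 1 / (m * (1+t^2)) :=
    one_div_le_one_div_of_le (by positivity) key
  rwa [one_div (m * (1+t^2)), mul_inv] at hle
  
lemma J_self {c : ℝ} (hc : 0 < c) : J c c = π / (2 * c) := by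
  have : ∀ t : ℝ, 1 / Real.sqrt ((c^2+t^2)*(c^2+t^2)) = (c^2+t^2)⁻¹ := by
    intro t
    rw [show (c^2+t^2)*(c^2+t^2) = (c^2+t^2)^2 by ring, Real.sqrt_sq (le_of_lt (sq_add_sq_pos hc t)), one_div]
  rw [J]
  simp_rw [this]
  have hderiv : ∀ x ∈ Ici (0:ℝ), HasDerivAt (fun t => c⁻¹ * Real.arctan (t / c)) ((c^2+x^2)⁻¹) x := by
    intro x _
    have h1 : HasDerivAt (fun t : ℝ => t / c) (1/c) x := (hasDerivAt_id x).div_const c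
    have h2 := (Real.hasDerivAt_arctan (x / c)).comp x h1
    have h3 := h2.const_mul c⁻¹
    refine h3.congr_deriv ?_
    field_simp
  have heq : (fun t : ℝ => 1 / Real.sqrt ((c^2+t^2)*(c^2+t^2))) = fun t : ℝ => (c^2+t^2)⁻¹ :=
    funext this
  have hint : IntegrableOn (fun x : ℝ => (c^2+x^2)⁻¹) (Ioi 0) := by
    have h := Jintegrable hc hc
    rw [heq] at h
    exact h.integrableOn
  have htend : Tendsto (fun x : ℝ => c⁻¹ * Real.arctan (x / c)) atTop (𝓝 (c⁻¹ * (π/2))) := by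
    exact ((tendsto_nhds_of_tendsto_nhdsWithin Real.tendsto_arctan_atTop).comp
      (tendsto_id.atTop_div_const hc)).const_mul c⁻¹
  rw [integral_Ioi_of_hasDerivAt_of_tendsto' hderiv hint htend]
  rw [zero_div, Real.arctan_zero, mul_zero, sub_zero]
  field_simp

end Stmt11

namespace Stmt11
open Stmt11

lemma J_anti {a b a' b' : ℝ} (ha' : 0 < a') (hb' : 0 < b') (haa : a' ≤ a) (hbb : b' ≤ b) :
    J a b ≤ J a' b' := by
  have ha : 0 < a := lt_of_lt_of_le ha' haa
  have hb : 0 < b := lt_of_lt_of_le hb' hbb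
  apply setIntegral_mono_on ((Jintegrable ha hb).integrableOn)
    ((Jintegrable ha' hb').integrableOn) measurableSet_Ioi
  intro t _
  apply one_div_le_one_div_of_le
  · exact Real.sqrt_pos.2 (by positivity)
  · apply Real.sqrt_le_sqrt
    apply mul_le_mul (by nlinarith) (by nlinarith) (by positivity) (by positivity)

lemma J_step {a b : ℝ} (ha : 0 < a) (hb : 0 < b) :
    J a b = J ((a+b)/2) (Real.sqrt (a*b)) := by
  set a1 := (a+b)/2 with ha1def
  set b1 := Real.sqrt (a*b) with hb1def
  have ha1 : 0 < a1 := by positivity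
  have hb1 : 0 < b1 := Real.sqrt_pos.2 (by positivity)
  have hb1sq : b1^2 = a*b := Real.sq_sqrt (by positivity)
  set g : ℝ → ℝ := fun u => 1 / Real.sqrt ((a1^2+u^2)*(b1^2+u^2)) with hg
  set f : ℝ → ℝ := fun t => (t - a*b/t)/2 with hfdef
  set f' : ℝ → ℝ := fun t => (1 + a*b/t^2)/2 with hf'def
  have hderiv : ∀ t ∈ Ioi (0:ℝ), HasDerivWithinAt f (f' t) (Ioi 0) t := by
    intro t ht
    have ht0 : t ≠ 0 := ne_of_gt ht
    have h1 := (((hasDerivAt_id t).sub ((hasDerivAt_inv ht0).const_mul (a*b)))).div_const 2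
    have h2 : HasDerivAt f (f' t) t := by
      have hfe : f = fun s : ℝ => (id s - a*b*s⁻¹)/2 := by
        funext s; rw [hfdef]; simp [div_eq_mul_inv]
      rw [hfe, hf'def]
      refine h1.congr_deriv ?_
      field_simp
      ring
    exact h2.hasDerivWithinAt
  have hinj : InjOn f (Ioi 0) := by
    intro s hs t ht hst
    rw [hfdef] at hst
    simp only at hst
    rw [mem_Ioi] at hs ht
    have hs0 : s ≠ 0 := ne_of_gt hs
    have ht0 : t ≠ 0 := ne_of_gt ht
    field_simp at hst
    have key : (s - t) * (s*t + a*b) = 0 := by nlinarith [hst]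
    rcases mul_eq_zero.1 key with h | h
    · linarith
    · nlinarith
  have himg : f '' (Ioi 0) = univ := by
    apply eq_univ_of_forall
    intro u
    have hs : 0 ≤ u^2 + a*b := by positivity
    set r := Real.sqrt (u^2 + a*b) with hrdef
    have hr2 : r^2 = u^2 + a*b := Real.sq_sqrt hs
    have hrabs : |u| < r := by
      rw [← Real.sqrt_sq_eq_abs]
      exact Real.sqrt_lt_sqrt (sq_nonneg u) (by nlinarith)
    have htpos : 0 < u + r := by
      rcases abs_lt.1 hrabs with ⟨h1, _⟩; linarith
    refine ⟨u + r, htpos, ?_⟩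
    rw [hfdef]
    simp only
    have hne : u + r ≠ 0 := ne_of_gt htpos
    field_simp
    nlinarith [hr2]
  have key := integral_image_eq_integral_abs_deriv_smul measurableSet_Ioi hderiv hinj g
  rw [himg, Measure.restrict_univ] at key
  -- LHS of key: ∫ u, g u = 2 * J a1 b1
  have hgint : Integrable g := Jintegrable ha1 hb1
  have heven : ∫ u, g u = 2 * J a1 b1 := by
    rw [← intervalIntegral.integral_Iic_add_Ioi (hgint.integrableOn) (hgint.integrableOn)]
    have : ∫ u in Iic (0:ℝ), g u = ∫ u in Ioi (0:ℝ), g u := by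
      have h2 : ∫ x in Iic (0:ℝ), g (-x) = ∫ x in Ioi (-(0:ℝ)), g x :=
        integral_comp_neg_Iic 0 g
      simp only [neg_zero] at h2
      rw [← h2]
      congr 1
      funext x
      rw [hg]; simp only [neg_sq]
    rw [this, J]; ring
  -- RHS of key
  have hrhs : ∫ t in Ioi (0:ℝ), |f' t| • g (f t)
      = 2 * J a b := by
    rw [show (2 : ℝ) * J a b = ∫ t in Ioi (0:ℝ), 2 * (1 / Real.sqrt ((a^2+t^2)*(b^2+t^2))) by
      rw [J, ← MeasureTheory.integral_const_mul]]
    apply setIntegral_congr_fun measurableSet_Ioi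
    intro t ht
    rw [mem_Ioi] at ht
    have ht0 : t ≠ 0 := ne_of_gt ht
    have hP : (0:ℝ) ≤ (t^2+a^2)*(t^2+b^2) := by positivity
    have hQ : (0:ℝ) ≤ (t^2+a*b)/(4*t^2) := by positivity
    have hprod : (a1^2+(f t)^2)*(b1^2+(f t)^2)
        = ((t^2+a^2)*(t^2+b^2)) * ((t^2+a*b)/(4*t^2))^2 := by
      rw [hfdef, ha1def, hb1sq]
      field_simp
      ring
    have hsqrt : Real.sqrt ((a1^2+(f t)^2)*(b1^2+(f t)^2))
        = Real.sqrt ((t^2+a^2)*(t^2+b^2)) * ((t^2+a*b)/(4*t^2)) := by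
      rw [hprod, Real.sqrt_mul hP, Real.sqrt_sq hQ]
    have hf'pos : 0 < f' t := by rw [hf'def]; positivity
    rw [hg]
    simp only [smul_eq_mul, abs_of_pos hf'pos]
    rw [hsqrt, hf'def]
    have hsp : 0 < Real.sqrt ((t^2+a^2)*(t^2+b^2)) := Real.sqrt_pos.2 (by positivity)
    field_simp
    ring
  simp only [J] at key heven hrhs ⊢
  linarith [key, heven, hrhs]

end Stmt11

namespace Stmt11

section AGM

variable {h : ℝ}

lemma agm_basic (h0 : 0 < h) (h1 : h ≤ 1) (n : ℕ) :
    0 < (agmPair 1 h n).2 ∧ (agmPair 1 h n).2 ≤ (agmPair 1 h n).1 ∧ (agmPair 1 h n).1 ≤ 1 := by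
  induction n with
  | zero => exact ⟨h0, h1, le_refl 1⟩
  | succ n ih =>
    obtain ⟨hb, hba, ha⟩ := ih
    set A := (agmPair 1 h n).1
    set B := (agmPair 1 h n).2
    have hA : 0 < A := lt_of_lt_of_le hb hba
    refine ⟨Real.sqrt_pos.2 (by positivity), ?_, by simp [agmPair]; linarith⟩
    show Real.sqrt (A * B) ≤ (A + B)/2
    rw [show (A+B)/2 = Real.sqrt (((A+B)/2)^2) from (Real.sqrt_sq (by positivity)).symm]
    exact Real.sqrt_le_sqrt (by nlinarith)

lemma agm_B_mono (h0 : 0 < h) (h1 : h ≤ 1) (n : ℕ) :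
    (agmPair 1 h n).2 ≤ (agmPair 1 h (n+1)).2 := by
  obtain ⟨hb, hba, _⟩ := agm_basic h0 h1 n
  show (agmPair 1 h n).2 ≤ Real.sqrt ((agmPair 1 h n).1 * (agmPair 1 h n).2)
  have key : Real.sqrt ((agmPair 1 h n).2^2) ≤ Real.sqrt ((agmPair 1 h n).1 * (agmPair 1 h n).2) :=
    Real.sqrt_le_sqrt (by nlinarith)
  rwa [Real.sqrt_sq hb.le] at key

lemma agm_A_anti (h0 : 0 < h) (h1 : h ≤ 1) : Antitone (fun n => (agmPair 1 h n).1) := by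
  apply antitone_nat_of_succ_le
  intro n
  obtain ⟨hb, hba, _⟩ := agm_basic h0 h1 n
  show ((agmPair 1 h n).1 + (agmPair 1 h n).2)/2 ≤ (agmPair 1 h n).1
  linarith

lemma agm_gap (h0 : 0 < h) (h1 : h ≤ 1) (n : ℕ) :
    (agmPair 1 h n).1 - (agmPair 1 h n).2 ≤ (1 - h) * (1/2)^n := by
  induction n with
  | zero => simp [agmPair]
  | succ n ih =>
    obtain ⟨hb, hba, ha⟩ := agm_basic h0 h1 n
    set A := (agmPair 1 h n).1
    set B := (agmPair 1 h n).2
    have key : (agmPair 1 h (n+1)).1 - (agmPair 1 h (n+1)).2 ≤ (A - B)/2 := by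
      show (A + B)/2 - Real.sqrt (A * B) ≤ (A - B)/2
      have key2 : Real.sqrt (B^2) ≤ Real.sqrt (A * B) := Real.sqrt_le_sqrt (by nlinarith)
      rw [Real.sqrt_sq hb.le] at key2
      linarith
    calc (agmPair 1 h (n+1)).1 - (agmPair 1 h (n+1)).2 ≤ (A - B)/2 := key
      _ ≤ ((1-h) * (1/2)^n)/2 := by linarith
      _ = (1-h) * (1/2)^(n+1) := by ring

lemma agm_tendsto (h0 : 0 < h) (h1 : h ≤ 1) :
    ∃ L : ℝ, 0 < L ∧ agm 1 h = L
      ∧ Filter.Tendsto (fun n => (agmPair 1 h n).1) Filter.atTop (nhds L)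
      ∧ Filter.Tendsto (fun n => (agmPair 1 h n).2) Filter.atTop (nhds L)
      ∧ ∀ n, (agmPair 1 h n).2 ≤ L ∧ L ≤ (agmPair 1 h n).1 := by
  have hbdd : BddBelow (Set.range fun n => (agmPair 1 h n).1) := by
    refine ⟨0, ?_⟩
    rintro x ⟨n, rfl⟩
    obtain ⟨hb, hba, _⟩ := agm_basic h0 h1 n
    exact (lt_of_lt_of_le hb hba).le
  set L := ⨅ n, (agmPair 1 h n).1 with hL
  have hA : Filter.Tendsto (fun n => (agmPair 1 h n).1) Filter.atTop (nhds L) :=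
    tendsto_atTop_ciInf (agm_A_anti h0 h1) hbdd
  have hgap : Filter.Tendsto (fun n => (agmPair 1 h n).1 - (agmPair 1 h n).2)
      Filter.atTop (nhds 0) := by
    apply squeeze_zero
    · intro n; obtain ⟨_, hba, _⟩ := agm_basic h0 h1 n; linarith
    · exact agm_gap h0 h1
    · simpa using (tendsto_pow_atTop_nhds_zero_of_lt_one (by norm_num : (0:ℝ) ≤ 1/2)
        (by norm_num : (1:ℝ)/2 < 1)).const_mul (1-h)
  have hB : Filter.Tendsto (fun n => (agmPair 1 h n).2) Filter.atTop (nhds L) := by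
    have := hA.sub hgap
    simpa using this
  have hLb : ∀ n, (agmPair 1 h n).2 ≤ L ∧ L ≤ (agmPair 1 h n).1 := by
    intro n
    constructor
    · apply ge_of_tendsto hA
      filter_upwards [Filter.eventually_ge_atTop n] with m hm
      calc (agmPair 1 h n).2 ≤ (agmPair 1 h m).2 :=
            monotone_nat_of_le_succ (agm_B_mono h0 h1) hm
        _ ≤ (agmPair 1 h m).1 := (agm_basic h0 h1 m).2.1
    · exact ciInf_le hbdd n
  have hLpos : 0 < L := lt_of_lt_of_le h0 (by simpa [agmPair] using (hLb 0).1)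
  exact ⟨L, hLpos, hA.limUnder_eq, hA, hB, hLb⟩

lemma J_gauss (h0 : 0 < h) (h1 : h ≤ 1) : J 1 h = π / (2 * agm 1 h) := by
  obtain ⟨L, hLpos, hagm, hA, hB, hLb⟩ := agm_tendsto h0 h1
  rw [hagm]
  have hstep : ∀ n, J (agmPair 1 h n).1 (agmPair 1 h n).2 = J 1 h := by
    intro n
    induction n with
    | zero => rfl
    | succ n ih =>
      rw [← ih]
      obtain ⟨hb, hba, _⟩ := agm_basic h0 h1 n
      have hA0 : 0 < (agmPair 1 h n).1 := lt_of_lt_of_le hb hba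
      exact (J_step hA0 hb).symm
  have hub : ∀ n, J 1 h ≤ π / (2 * (agmPair 1 h n).2) := by
    intro n
    obtain ⟨hb, hba, _⟩ := agm_basic h0 h1 n
    rw [← hstep n, ← J_self hb]
    exact J_anti hb hb hba (le_refl _)
  have hlb : ∀ n, π / (2 * (agmPair 1 h n).1) ≤ J 1 h := by
    intro n
    obtain ⟨hb, hba, _⟩ := agm_basic h0 h1 n
    have hA0 : 0 < (agmPair 1 h n).1 := lt_of_lt_of_le hb hba
    rw [← hstep n, ← J_self hA0]
    exact J_anti hA0 hb (le_refl _) hba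
  have h2L : Filter.Tendsto (fun n => π / (2 * (agmPair 1 h n).2)) Filter.atTop
      (nhds (π / (2 * L))) := by
    apply Filter.Tendsto.div tendsto_const_nhds (hB.const_mul 2) (by positivity)
  have h2L' : Filter.Tendsto (fun n => π / (2 * (agmPair 1 h n).1)) Filter.atTop
      (nhds (π / (2 * L))) := by
    apply Filter.Tendsto.div tendsto_const_nhds (hA.const_mul 2) (by positivity)
  have le1 : J 1 h ≤ π / (2 * L) := ge_of_tendsto h2L (Filter.Eventually.of_forall hub)
  have le2 : π / (2 * L) ≤ J 1 h := le_of_tendsto h2L' (Filter.Eventually.of_forall hlb)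
  linarith

end AGM
end Stmt11

namespace Stmt11

lemma ell_eq_J {h : ℝ} (h0 : 0 < h) (h1 : h < 1) :
    ∫ s in (0:ℝ)..(π/2), 1 / Real.sqrt (1 - (1 - h^2) * Real.sin s^2) = J 1 h := by
  have hpi : (0:ℝ) ≤ π/2 := by positivity
  rw [intervalIntegral.integral_of_le hpi, MeasureTheory.integral_Ioc_eq_integral_Ioo]
  set g : ℝ → ℝ := fun t => 1 / Real.sqrt ((1^2+t^2)*(h^2+t^2)) with hg
  set f : ℝ → ℝ := fun s => h * Real.tan s with hfdef
  set f' : ℝ → ℝ := fun s => h * (1 / Real.cos s^2) with hf'def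
  have hcos : ∀ s ∈ Ioo (0:ℝ) (π/2), 0 < Real.cos s := fun s hs =>
    Real.cos_pos_of_mem_Ioo ⟨by linarith [hs.1, Real.pi_pos], hs.2⟩
  have hderiv : ∀ s ∈ Ioo (0:ℝ) (π/2), HasDerivWithinAt f (f' s) (Ioo 0 (π/2)) s := by
    intro s hs
    exact ((Real.hasDerivAt_tan (ne_of_gt (hcos s hs))).const_mul h).hasDerivWithinAt
  have hsub : Ioo (0:ℝ) (π/2) ⊆ Ioo (-(π/2)) (π/2) := fun s hs =>
    ⟨by linarith [hs.1, Real.pi_pos], hs.2⟩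
  have hinj : InjOn f (Ioo 0 (π/2)) := by
    intro x hx y hy hxy
    exact Real.injOn_tan (hsub hx) (hsub hy) (mul_left_cancel₀ (ne_of_gt h0) hxy)
  have himg : f '' (Ioo 0 (π/2)) = Ioi 0 := by
    apply Subset.antisymm
    · rintro t ⟨s, hs, rfl⟩
      exact mem_Ioi.2 (mul_pos h0 (Real.tan_pos_of_pos_of_lt_pi_div_two hs.1 hs.2))
    · intro t ht
      rw [mem_Ioi] at ht
      refine ⟨Real.arctan (t/h), ⟨by rw [← Real.arctan_zero]; exact Real.arctan_strictMono (by positivity), Real.arctan_lt_pi_div_two _⟩, ?_⟩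
      rw [hfdef]
      simp only [Real.tan_arctan]
      field_simp
  have key := integral_image_eq_integral_abs_deriv_smul measurableSet_Ioo hderiv hinj g
  rw [himg] at key
  rw [show J 1 h = ∫ t in Ioi (0:ℝ), g t from rfl, key]
  apply setIntegral_congr_fun measurableSet_Ioo
  intro s hs
  have hc := hcos s hs
  have hc0 : Real.cos s ≠ 0 := ne_of_gt hc
  have hC : 1 - (1-h^2) * Real.sin s^2 = Real.cos s^2 + h^2 * Real.sin s^2 := by
    have := Real.sin_sq_add_cos_sq s
    ring_nf
    nlinarith [this]
  have hCpos : (0:ℝ) < 1 - (1-h^2) * Real.sin s^2 := by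
    rw [hC]; positivity
  have hprod : ((1:ℝ)^2 + (f s)^2) * (h^2 + (f s)^2)
      = (1 - (1-h^2) * Real.sin s^2) * (h/Real.cos s^2)^2 := by
    rw [hfdef, hC]
    simp only
    rw [Real.tan_eq_sin_div_cos]
    field_simp
    linear_combination
      (Real.sin_sq_add_cos_sq s)
  have hf'pos : 0 < f' s := by rw [hf'def]; positivity
  rw [hg]
  simp only [smul_eq_mul, abs_of_pos hf'pos]
  rw [hprod, Real.sqrt_mul hCpos.le, Real.sqrt_sq (by positivity : (0:ℝ) ≤ h/Real.cos s^2),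
    hf'def]
  have hs1 : 0 < Real.sqrt (1 - (1-h^2) * Real.sin s^2) := Real.sqrt_pos.2 hCpos
  field_simp

end Stmt11

namespace Stmt11

lemma part1 {h : ℝ} (h0 : 0 < h) (h1 : h < 1) :
    ∫ x in Real.arcsin h..(π/2), 1 / Real.sqrt (Real.sin x^2 - h^2)
      = ∫ s in (0:ℝ)..(π/2), 1 / Real.sqrt (1 - (1-h^2) * Real.sin s^2) := by
  have hh2 : (0:ℝ) < 1 - h^2 := by nlinarith
  set c := Real.sqrt (1 - h^2) with hcdef
  have hc2 : c^2 = 1 - h^2 := Real.sq_sqrt hh2.le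
  have hc0 : 0 < c := Real.sqrt_pos.2 hh2
  have hc1 : c < 1 := by nlinarith [hc2, hc0]
  have harccos_c : Real.arccos c = Real.arcsin h := by
    rw [hcdef, ← Real.cos_arcsin]
    exact Real.arccos_cos (Real.arcsin_nonneg.2 h0.le)
      (le_trans (Real.arcsin_le_pi_div_two h) (by linarith [Real.pi_pos]))
  have harcsin_lt : Real.arcsin h < π/2 := by
    rw [← harccos_c]
    exact lt_of_le_of_ne (Real.arccos_le_pi_div_two.2 hc0.le)
      (fun he => by rw [Real.arccos_eq_pi_div_two] at he; exact hc0.ne' he)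
  set g : ℝ → ℝ := fun x => 1 / Real.sqrt (Real.sin x^2 - h^2) with hg
  set φ : ℝ → ℝ := fun s => Real.arccos (c * Real.sin s) with hφdef
  set φ' : ℝ → ℝ := fun s => -(1/Real.sqrt (1 - (c * Real.sin s)^2)) * (c * Real.cos s)
    with hφ'def
  have hy : ∀ s ∈ Ioo (0:ℝ) (π/2), 0 < c * Real.sin s ∧ c * Real.sin s < c := by
    intro s hs
    have hsinpos : 0 < Real.sin s := Real.sin_pos_of_pos_of_lt_pi hs.1
      (lt_trans hs.2 (by linarith [Real.pi_pos]))
    have hsinlt : Real.sin s < 1 := by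
      have hlt := Real.strictMonoOn_sin
        (Set.mem_Icc.2 ⟨by linarith [hs.1, Real.pi_pos], hs.2.le⟩)
        (Set.mem_Icc.2 ⟨by linarith [Real.pi_pos], le_refl (π/2)⟩) hs.2
      simpa using hlt
    exact ⟨by positivity, by nlinarith⟩
  have hderiv : ∀ s ∈ Ioo (0:ℝ) (π/2), HasDerivWithinAt φ (φ' s) (Ioo 0 (π/2)) s := by
    intro s hs
    obtain ⟨hy0, hy1⟩ := hy s hs
    have hd1 : HasDerivAt (fun s : ℝ => c * Real.sin s) (c * Real.cos s) s :=
      (Real.hasDerivAt_sin s).const_mul c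
    have hd2 := (Real.hasDerivAt_arccos (by linarith : c * Real.sin s ≠ -1)
      (by linarith : c * Real.sin s ≠ 1)).comp s hd1
    exact hd2.hasDerivWithinAt
  have hmem : ∀ s ∈ Ioo (0:ℝ) (π/2), c * Real.sin s ∈ Icc (-1:ℝ) 1 := by
    intro s hs
    obtain ⟨hy0, hy1⟩ := hy s hs
    exact ⟨by linarith, by linarith⟩
  have hanti : StrictAntiOn φ (Ioo 0 (π/2)) := by
    intro x hx y hy' hxy
    have hsin : Real.sin x < Real.sin y := Real.strictMonoOn_sin
      ⟨by linarith [hx.1, Real.pi_pos], hx.2.le⟩ ⟨by linarith [hy'.1, Real.pi_pos], hy'.2.le⟩ hxy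
    exact Real.strictAntiOn_arccos (hmem x hx) (hmem y hy')
      (by nlinarith [hsin])
  have hinj : InjOn φ (Ioo 0 (π/2)) := hanti.injOn
  have himg : φ '' (Ioo 0 (π/2)) = Ioo (Real.arcsin h) (π/2) := by
    apply Subset.antisymm
    · rintro x ⟨s, hs, rfl⟩
      obtain ⟨hy0, hy1⟩ := hy s hs
      constructor
      · rw [← harccos_c]
        exact Real.strictAntiOn_arccos (hmem s hs) ⟨by linarith, hc1.le⟩ hy1
      · rw [← Real.arccos_zero]
        exact Real.strictAntiOn_arccos ⟨by norm_num, by norm_num⟩ (hmem s hs) hy0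
    · intro x hx
      have hx0 : 0 < x := lt_of_le_of_lt (Real.arcsin_nonneg.2 h0.le) hx.1
      have hcosx_pos : 0 < Real.cos x := Real.cos_pos_of_mem_Ioo
        ⟨by linarith [Real.pi_pos], hx.2⟩
      have hcosx_lt : Real.cos x < c := by
        rw [hcdef, ← Real.cos_arcsin]
        apply Real.strictAntiOn_cos ⟨Real.arcsin_nonneg.2 h0.le, by
          linarith [Real.arcsin_le_pi_div_two h, Real.pi_pos]⟩
          ⟨hx0.le, by linarith [hx.2, Real.pi_pos]⟩ hx.1
      have hratio : Real.cos x / c ∈ Ioo (0:ℝ) 1 := by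
        constructor
        · positivity
        · rw [div_lt_one hc0]; exact hcosx_lt
      refine ⟨Real.arcsin (Real.cos x / c), ⟨?_, ?_⟩, ?_⟩
      · exact Real.arcsin_pos.2 hratio.1
      · exact Real.arcsin_lt_pi_div_two.2 hratio.2
      · rw [hφdef]
        simp only
        rw [Real.sin_arcsin (by linarith [hratio.1]) (by linarith [hratio.2]),
          mul_div_cancel₀ _ (ne_of_gt hc0)]
        exact Real.arccos_cos hx0.le (by linarith [hx.2, Real.pi_pos])
  have key := integral_image_eq_integral_abs_deriv_smul measurableSet_Ioo hderiv hinj g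
  rw [himg] at key
  rw [intervalIntegral.integral_of_le harcsin_lt.le,
    MeasureTheory.integral_Ioc_eq_integral_Ioo,
    intervalIntegral.integral_of_le (by positivity : (0:ℝ) ≤ π/2),
    MeasureTheory.integral_Ioc_eq_integral_Ioo]
  rw [show (∫ x in Ioo (Real.arcsin h) (π/2), 1 / Real.sqrt (Real.sin x^2 - h^2))
    = ∫ x in Ioo (Real.arcsin h) (π/2), g x from rfl, key]
  apply setIntegral_congr_fun measurableSet_Ioo
  intro s hs
  obtain ⟨hy0, hy1⟩ := hy s hs
  have hcoss : 0 < Real.cos s := Real.cos_pos_of_mem_Ioo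
    ⟨by linarith [hs.1, Real.pi_pos], hs.2⟩
  have hy2 : (c * Real.sin s)^2 < 1 := by nlinarith
  have hroot : 0 < Real.sqrt (1 - (c * Real.sin s)^2) := Real.sqrt_pos.2 (by linarith)
  have hsinφ : Real.sin (φ s)^2 - h^2 = (c * Real.cos s)^2 := by
    rw [hφdef]
    simp only
    rw [Real.sin_arccos, Real.sq_sqrt (by linarith : (0:ℝ) ≤ 1 - (c * Real.sin s)^2)]
    nlinarith [Real.sin_sq_add_cos_sq s, hc2]
  have habs : |φ' s| = (1/Real.sqrt (1 - (c * Real.sin s)^2)) * (c * Real.cos s) := by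
    rw [hφ'def]
    simp only
    rw [abs_mul, abs_neg, abs_of_pos (by positivity : (0:ℝ) < 1/Real.sqrt (1 - (c*Real.sin s)^2)),
      abs_of_pos (by positivity : (0:ℝ) < c * Real.cos s)]
  rw [hg]
  simp only [smul_eq_mul]
  rw [habs, hsinφ, Real.sqrt_sq (by positivity : (0:ℝ) ≤ c * Real.cos s)]
  have heq2 : 1 - (c * Real.sin s)^2 = 1 - (1-h^2) * Real.sin s^2 := by
    rw [mul_pow, hc2]
  rw [heq2]
  rw [mul_assoc, mul_one_div, div_self (ne_of_gt (mul_pos hc0 hcoss)), mul_one]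

end Stmt11


/-- The period function `T(h) = 4∫_{arcsin h}^{π/2} dx/√(sin²x - h²)` of the Taylor–Green
streamline equals the complete elliptic integral `4∫_0^{π/2} ds/√(1-(1-h²)sin²s)`, which by
Gauss's theorem equals `2π / M(1,h)`, where `M` is the arithmetic–geometric mean. -/
theorem stmt_11 (h : ℝ) (hh : h ∈ Set.Ioo (0 : ℝ) 1) :
    (4 * ∫ x in Real.arcsin h..(Real.pi / 2), 1 / Real.sqrt (Real.sin x ^ 2 - h ^ 2)
        = 4 * ∫ s in (0 : ℝ)..(Real.pi / 2),
            1 / Real.sqrt (1 - (1 - h ^ 2) * Real.sin s ^ 2))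
    ∧ (4 * ∫ s in (0 : ℝ)..(Real.pi / 2), 1 / Real.sqrt (1 - (1 - h ^ 2) * Real.sin s ^ 2)
        = 2 * Real.pi / agm 1 h) := by
  obtain ⟨h0, h1⟩ := hh
  constructor
  · rw [Stmt11.part1 h0 h1]
  · rw [Stmt11.ell_eq_J h0 h1, Stmt11.J_gauss h0 h1.le]
    obtain ⟨L, hLpos, hagm, _⟩ := Stmt11.agm_tendsto h0 h1.le
    rw [hagm]
    field_simp
    ring
end

section
/- Let X be a Hilbert space with orthogonal decomposition X = V_s ⊕ V_u invariant for a bounded self-adjoint operator H, with b₁ := inf{⟨Hω,ω⟩ : ω ∈ V_s, ‖ω‖=1} > 0 and b₂ := sup{|⟨Hω,ω⟩| : ω ∈ V_u, ‖ω‖=1} < ∞. Let P be an orthogonal projection with ‖Pω‖² ≥ b₃‖ω‖² for all ω ∈ V_u, where b₃ ∈ (0,1]. If (1-b₃)b₂ < b₃² b₁, then any f = u + s with u ∈ V_u, s ∈ V_s satisfying ⟨Hf, f⟩ = 0 and Pf = 0 must be zero. -/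
/-- Key coercivity estimate for orbital stability: with `X = V_s ⊕ V_u` orthogonal and
`H`-invariant, `b₁` a lower bound for `⟨H·,·⟩` on `V_s`, `b₂` an upper bound for `|⟨H·,·⟩|`
on `V_u`, `P` an orthogonal projection with `‖Pω‖² ≥ b₃‖ω‖²` on `V_u`, and
`(1-b₃)b₂ < b₃²b₁`, any `f = u + s` with `⟨Hf,f⟩ = 0` and `Pf = 0` vanishes. -/
theorem stmt_13 {X : Type*} [NormedAddCommGroup X] [InnerProductSpace ℝ X]
    (Vs Vu : Submodule ℝ X)
    (horth : ∀ u ∈ Vu, ∀ s ∈ Vs, (inner ℝ u s : ℝ) = 0)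
    (H : X →L[ℝ] X)
    (hH : ∀ f g : X, (inner ℝ (H f) g : ℝ) = inner ℝ f (H g))
    (hinvs : ∀ v ∈ Vs, H v ∈ Vs) (hinvu : ∀ v ∈ Vu, H v ∈ Vu)
    (b₁ b₂ b₃ : ℝ) (hb₁pos : 0 < b₁)
    (hb₁ : ∀ ω ∈ Vs, b₁ * ‖ω‖ ^ 2 ≤ (inner ℝ (H ω) ω : ℝ))
    (hb₂ : ∀ ω ∈ Vu, |(inner ℝ (H ω) ω : ℝ)| ≤ b₂ * ‖ω‖ ^ 2)
    (P : X →L[ℝ] X)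
    (hPidem : ∀ x, P (P x) = P x)
    (hPsa : ∀ x y : X, (inner ℝ (P x) y : ℝ) = inner ℝ x (P y))
    (hb₃pos : 0 < b₃) (hb₃le : b₃ ≤ 1)
    (hb₃ : ∀ ω ∈ Vu, b₃ * ‖ω‖ ^ 2 ≤ ‖P ω‖ ^ 2)
    (hcond : (1 - b₃) * b₂ < b₃ ^ 2 * b₁)
    (u s : X) (hu : u ∈ Vu) (hs : s ∈ Vs)
    (hform : (inner ℝ (H (u + s)) (u + s) : ℝ) = 0)
    (hP : P (u + s) = 0) :
    u + s = 0 := by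
  have hHu := hinvu u hu
  have hHs := hinvs s hs
  have c1 : (inner ℝ (H u) s : ℝ) = 0 := horth _ hHu _ hs
  have c2 : (inner ℝ (H s) u : ℝ) = 0 := by
    rw [real_inner_comm]; exact horth _ hu _ hHs
  have hsu : (inner ℝ u s : ℝ) = 0 := horth _ hu _ hs
  have hexp : (inner ℝ (H u) u : ℝ) + inner ℝ (H s) s = 0 := by
    have h := hform
    simp only [map_add, inner_add_left, inner_add_right, c1, c2] at h
    linarith
  have hA : b₁ * ‖s‖ ^ 2 ≤ b₂ * ‖u‖ ^ 2 := by
    have h1 := hb₁ s hs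
    have h2 := (abs_le.mp (hb₂ u hu)).1
    linarith
  have hPus : P u = - P s := by
    have h : P u + P s = 0 := by rw [← map_add]; exact hP
    exact eq_neg_of_add_eq_zero_left h
  have hnPu : ‖P u‖ ^ 2 = (inner ℝ (P u) u : ℝ) := by
    rw [← real_inner_self_eq_norm_sq, hPsa u (P u), hPidem, real_inner_comm]
  have hkey : (inner ℝ (P u) u : ℝ) = (inner ℝ s (u - P u) : ℝ) := by
    rw [hPus, inner_neg_left, hPsa, inner_sub_right, inner_neg_right,
      real_inner_comm u s, hsu, hPus, inner_neg_right]
    ring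
  have hCS : (inner ℝ s (u - P u) : ℝ) ≤ ‖s‖ * ‖u - P u‖ :=
    real_inner_le_norm s (u - P u)
  have hsub : ‖u - P u‖ ^ 2 = ‖u‖ ^ 2 - ‖P u‖ ^ 2 := by
    have h := norm_sub_sq_real u (P u)
    have h2 : (inner ℝ u (P u) : ℝ) = ‖P u‖ ^ 2 := by
      rw [hnPu, real_inner_comm]
    rw [h2] at h
    linarith
  have hF2 : b₃ * ‖u‖ ^ 2 ≤ ‖P u‖ ^ 2 := hb₃ u hu
  have hF3 : ‖P u‖ ^ 2 ≤ ‖s‖ * ‖u - P u‖ := by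
    rw [hnPu, hkey]; exact hCS
  have hnormu : (0:ℝ) ≤ ‖u‖ := norm_nonneg u
  have hnorms : (0:ℝ) ≤ ‖s‖ := norm_nonneg s
  have hnormw : (0:ℝ) ≤ ‖u - P u‖ := norm_nonneg _
  by_cases hu0 : u = 0
  · have hs0 : s = 0 := by
      have h1 := hb₁ s hs
      have h2 : (inner ℝ (H u) u : ℝ) = 0 := by simp [hu0]
      have : b₁ * ‖s‖ ^ 2 ≤ 0 := by
        rw [h2] at hexp; linarith
      have hns2 : ‖s‖ ^ 2 ≤ 0 := (mul_le_mul_iff_right₀ hb₁pos).mp (by linarith)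
      have : ‖s‖ ^ 2 = 0 := le_antisymm hns2 (sq_nonneg _)
      have : ‖s‖ = 0 := by nlinarith [sq_nonneg ‖s‖]
      exact norm_eq_zero.mp this
    simp [hu0, hs0]
  · exfalso
    have hnu : 0 < ‖u‖ := norm_pos_iff.mpr hu0
    have hb2nn : 0 ≤ b₂ * ‖u‖ ^ 2 := le_trans (abs_nonneg _) (hb₂ u hu)
    have hb2 : 0 ≤ b₂ := by nlinarith [mul_pos hnu hnu]
    have hnu2 : (0:ℝ) < ‖u‖ ^ 2 := by positivity
    -- squared estimate: b₃² ‖u‖⁴ ≤ (1-b₃) ‖s‖² ‖u‖²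
    have hsq : (b₃ * ‖u‖ ^ 2) ^ 2 ≤ ‖s‖ ^ 2 * ((1 - b₃) * ‖u‖ ^ 2) := by
      have h1 : b₃ * ‖u‖ ^ 2 ≤ ‖s‖ * ‖u - P u‖ := le_trans hF2 hF3
      have h2 : ‖u - P u‖ ^ 2 ≤ (1 - b₃) * ‖u‖ ^ 2 := by
        rw [hsub]; linarith
      have ha : (0:ℝ) ≤ b₃ * ‖u‖ ^ 2 := by positivity
      have step1 : (b₃ * ‖u‖ ^ 2) ^ 2 ≤ (‖s‖ * ‖u - P u‖) ^ 2 :=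
        pow_le_pow_left₀ ha h1 2
      have step2 : (‖s‖ * ‖u - P u‖) ^ 2 = ‖s‖ ^ 2 * ‖u - P u‖ ^ 2 := by ring
      have step3 : ‖s‖ ^ 2 * ‖u - P u‖ ^ 2 ≤ ‖s‖ ^ 2 * ((1 - b₃) * ‖u‖ ^ 2) :=
        mul_le_mul_of_nonneg_left h2 (sq_nonneg ‖s‖)
      linarith [step1, step2.le, step2.ge, step3]
    have hkey2 : b₃ ^ 2 * ‖u‖ ^ 2 ≤ (1 - b₃) * ‖s‖ ^ 2 := by
      have h : (b₃ ^ 2 * ‖u‖ ^ 2) * ‖u‖ ^ 2 ≤ ((1 - b₃) * ‖s‖ ^ 2) * ‖u‖ ^ 2 := by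
        have e1 : (b₃ ^ 2 * ‖u‖ ^ 2) * ‖u‖ ^ 2 = (b₃ * ‖u‖ ^ 2) ^ 2 := by ring
        have e2 : ((1 - b₃) * ‖s‖ ^ 2) * ‖u‖ ^ 2 = ‖s‖ ^ 2 * ((1 - b₃) * ‖u‖ ^ 2) := by ring
        rw [e1, e2]; exact hsq
      exact le_of_mul_le_mul_right h hnu2
    have h13a : 0 < b₃ ^ 2 * ‖u‖ ^ 2 := by positivity
    have h13 : 0 < (1 - b₃) * ‖s‖ ^ 2 := lt_of_lt_of_le h13a hkey2
    have hns2 : 0 < ‖s‖ ^ 2 := by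
      rcases lt_or_ge 0 (‖s‖ ^ 2) with h | h
      · exact h
      · exfalso
        have hnp : (1 - b₃) * ‖s‖ ^ 2 ≤ 0 :=
          mul_nonpos_of_nonneg_of_nonpos (by linarith) h
        linarith
    have hx1 : b₃ ^ 2 * (b₁ * ‖s‖ ^ 2) ≤ b₃ ^ 2 * (b₂ * ‖u‖ ^ 2) :=
      mul_le_mul_of_nonneg_left hA (sq_nonneg b₃)
    have hx2 : b₂ * (b₃ ^ 2 * ‖u‖ ^ 2) ≤ b₂ * ((1 - b₃) * ‖s‖ ^ 2) :=
      mul_le_mul_of_nonneg_left hkey2 hb2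
    have hx3 : ((1 - b₃) * b₂) * ‖s‖ ^ 2 < (b₃ ^ 2 * b₁) * ‖s‖ ^ 2 :=
      mul_lt_mul_of_pos_right hcond hns2
    linarith [hx1, hx2, hx3]
end

section
/- Let X be a Hilbert space, J skew-adjoint and H = H_s + H_u bounded self-adjoint, with H_s self-adjoint and coercive (⟨H_s f, f⟩ ≥ c‖f‖² for some c > 0), H_u of finite rank with range V_u, and H_s, H_u commuting. Set T = H_s^{1/2} J H_s^{1/2}. For λ with Re(λ) ≠ 0, define M_λ = Id + H_u H_s⁻¹ (T - λ)⁻¹ T on V_u. Then the maps f ↦ H_u H_s^{-1/2} f and z ↦ -H_s^{-1/2}(T - λ)⁻¹ T z are mutually inverse linear isomorphisms between Ker(JH - λ) and Ker(M_λ). In particular λ is an eigenvalue of JH with Re(λ) ≠ 0 if and only if det(M_λ) = 0. -/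
/-- Finite-dimensional instability criterion for Hamiltonian operators `L = J(H_s + H_u)`:
with `J` skew-adjoint, `H_s` self-adjoint coercive with square root `S` and inverse `Hsinv`,
`H_u` self-adjoint of finite rank commuting with `H_s` (and with `S`), `T = S J S`, and
`R = (T - μ)⁻¹` for `Re μ ≠ 0`, the maps `f ↦ H_u S⁻¹ f` and `z ↦ -S⁻¹ (T - μ)⁻¹ T z` are
mutually inverse isomorphisms between `Ker(L - μ)` and `Ker(M_μ)` where
`M_μ = Id + H_u H_s⁻¹ (T - μ)⁻¹ T` on `V_u = range H_u`; in particular `μ` is an eigenvalue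
of `L` iff `M_μ` has nontrivial kernel in `V_u` (iff `det M_μ = 0`). -/
theorem stmt_15 {X : Type*} [NormedAddCommGroup X] [InnerProductSpace ℂ X] [CompleteSpace X]
    (J : X →ₗ[ℂ] X)
    (hJ : ∀ f g : X, (inner ℂ (J f) g : ℂ) = -inner ℂ f (J g))
    (Hs Hu : X →L[ℂ] X)
    (hHssa : ∀ f g : X, (inner ℂ (Hs f) g : ℂ) = inner ℂ f (Hs g))
    (hHusa : ∀ f g : X, (inner ℂ (Hu f) g : ℂ) = inner ℂ f (Hu g))
    (c : ℝ) (hc : 0 < c)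
    (hcoer : ∀ f : X, c * ‖f‖ ^ 2 ≤ ((inner ℂ (Hs f) f : ℂ)).re)
    (hfin : FiniteDimensional ℂ (LinearMap.range (Hu : X →ₗ[ℂ] X)))
    (hcomm : ∀ f, Hs (Hu f) = Hu (Hs f))
    (S : X →L[ℂ] X)
    (hSsa : ∀ f g : X, (inner ℂ (S f) g : ℂ) = inner ℂ f (S g))
    (hScoer : ∀ f : X, 0 < ((inner ℂ (S f) f : ℂ)).re ∨ f = 0)
    (hSsq : ∀ f, S (S f) = Hs f)
    (hScomm : ∀ f, S (Hu f) = Hu (S f))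
    (Sinv : X →L[ℂ] X) (hSinv : ∀ f, S (Sinv f) = f) (hSinv' : ∀ f, Sinv (S f) = f)
    (Hsinv : X →L[ℂ] X) (hHsinv : ∀ f, Hs (Hsinv f) = f) (hHsinv' : ∀ f, Hsinv (Hs f) = f)
    (μ : ℂ) (hμ : μ.re ≠ 0)
    (T : X →ₗ[ℂ] X) (hT : ∀ f, T f = S (J (S f)))
    (R : X →ₗ[ℂ] X)
    (hR1 : ∀ f, T (R f) - μ • R f = f) (hR2 : ∀ f, R (T f - μ • f) = f) :
    (∀ f : X, J (Hs f + Hu f) = μ • f →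
        Hu (Sinv f) + Hu (Hsinv (R (T (Hu (Sinv f))))) = 0)
    ∧ (∀ z : X, z ∈ LinearMap.range (Hu : X →ₗ[ℂ] X) → z + Hu (Hsinv (R (T z))) = 0 →
        J (Hs (-(Sinv (R (T z)))) + Hu (-(Sinv (R (T z)))))
          = μ • (-(Sinv (R (T z)))))
    ∧ (∀ f : X, J (Hs f + Hu f) = μ • f →
        -(Sinv (R (T (Hu (Sinv f))))) = f)
    ∧ (∀ z : X, z ∈ LinearMap.range (Hu : X →ₗ[ℂ] X) → z + Hu (Hsinv (R (T z))) = 0 →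
        Hu (Sinv (-(Sinv (R (T z))))) = z)
    ∧ ((∃ f : X, f ≠ 0 ∧ J (Hs f + Hu f) = μ • f)
        ↔ ∃ z : X, z ≠ 0 ∧ z ∈ LinearMap.range (Hu : X →ₗ[ℂ] X) ∧ z + Hu (Hsinv (R (T z))) = 0) := by

  have hSinj : ∀ x y : X, S x = S y → x = y := fun x y h => by
    rw [← hSinv' x, h, hSinv' y]
  have hHuSinv : ∀ x, Hu (Sinv x) = Sinv (Hu x) := by
    intro x
    apply hSinj
    rw [hScomm, hSinv, hSinv]
  have hHsinv2 : ∀ x, Hsinv x = Sinv (Sinv x) := by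
    intro x
    have h1 : Hs (Sinv (Sinv x)) = x := by rw [← hSsq, hSinv, hSinv]
    calc Hsinv x = Hsinv (Hs (Sinv (Sinv x))) := by rw [h1]
      _ = Sinv (Sinv x) := hHsinv' _
  have hSHsinv : ∀ x, S (Hsinv x) = Sinv x := by
    intro x; rw [hHsinv2, hSinv]
  have hHsinvS : ∀ x, Hsinv (S x) = Sinv x := by
    intro x; rw [hHsinv2, hSinv']
  have key1 : ∀ f : X, J (Hs f + Hu f) = μ • f → R (T (Hu (Sinv f))) = -(S f) := by
    intro f hf
    have h1 : T (Hu (Sinv f)) = T (-(S f)) - μ • (-(S f)) := by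
      have e1 : T (Hu (Sinv f)) = S (J (Hu f)) := by rw [hT, hScomm, hSinv]
      have e2 : T (-(S f)) = -(S (J (Hs f))) := by
        rw [map_neg, hT, hSsq]
      have e3 : S (J (Hs f)) + S (J (Hu f)) = μ • S f := by
        have := congrArg S hf
        rw [map_add J, map_add S, map_smul] at this
        exact this
      rw [e1, e2, smul_neg, sub_neg_eq_add, ← e3]
      abel
    rw [h1, hR2]
  have key2 : ∀ z : X, z + Hu (Hsinv (R (T z))) = 0 →
      J (Hs (-(Sinv (R (T z)))) + Hu (-(Sinv (R (T z))))) = μ • (-(Sinv (R (T z)))) := by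
    intro z hz
    set r := R (T z) with hrdef
    have hr : T r - μ • r = T z := hR1 (T z)
    have hz' : Hu (Hsinv r) = -z := eq_neg_of_add_eq_zero_right hz
    have e1 : Hs (Sinv r) = S r := by rw [← hSsq, hSinv]
    have e2 : Hu (Sinv r) = -(S z) := by
      rw [← hSHsinv, ← hScomm, hz', map_neg]
    have e3 : S (J (S (r - z))) = μ • r := by
      have h4 : T (r - z) = μ • r := by
        rw [map_sub, ← hr]; abel
      rw [← hT]; exact h4
    have e4 : J (S (r - z)) = μ • Sinv r := by
      have := congrArg Sinv e3
      rwa [hSinv', map_smul] at this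
    rw [map_neg Hs, map_neg Hu, e1, e2, neg_neg]
    have e5 : -(S r) + S z = -(S (r - z)) := by rw [map_sub]; abel
    rw [e5, map_neg, e4, smul_neg]
  have key4 : ∀ z : X, z + Hu (Hsinv (R (T z))) = 0 →
      Hu (Sinv (-(Sinv (R (T z))))) = z := by
    intro z hz
    have hz' : Hu (Hsinv (R (T z))) = -z := eq_neg_of_add_eq_zero_right hz
    rw [map_neg Sinv, map_neg Hu, ← hHsinv2, hz', neg_neg]
  have key3 : ∀ f : X, J (Hs f + Hu f) = μ • f → -(Sinv (R (T (Hu (Sinv f))))) = f := by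
    intro f hf
    rw [key1 f hf, map_neg Sinv, neg_neg, hSinv']
  refine ⟨?_, fun z _ hz => key2 z hz, key3, fun z _ hz => key4 z hz, ?_, ?_⟩
  · intro f hf
    rw [key1 f hf, map_neg Hsinv, hHsinvS, map_neg Hu, add_neg_cancel]
  · rintro ⟨f, hf0, hf⟩
    refine ⟨Hu (Sinv f), ?_, ⟨Sinv f, rfl⟩, ?_⟩
    · intro h0
      apply hf0
      rw [← key3 f hf, h0, map_zero T, map_zero R, map_zero Sinv, neg_zero]
    · rw [key1 f hf, map_neg Hsinv, hHsinvS, map_neg Hu, add_neg_cancel]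
  · rintro ⟨z, hz0, hzr, hz⟩
    refine ⟨-(Sinv (R (T z))), ?_, key2 z hz⟩
    intro h0
    apply hz0
    rw [← key4 z hz, h0, map_zero Sinv, map_zero Hu]
end

section
/- Suppose λ is an eigenvalue of the Taylor–Green linearized operator L = JH restricted to the invariant subspace (Ev_x Ev_y)^[odd]_+, with Re(λ) > 0, and with eigenfunction normalized as f = E_{1,0} + f₊ where f₊ ⊥ E_{1,0}. Given that ⟨Hf, f⟩ = 0, ⟨H E_{1,0}, E_{1,0}⟩ = -4π², ⟨Hf₊, f₊⟩ ≥ (3/5)‖f₊‖², J E_{1,0} = (i/2)E_{1,0} - (1/2)E_{2,1}, H E_{2,1} = -(3/5)E_{2,1}, ‖E_{1,0}‖² = 4π², and ‖E_{2,1}‖ = √2 π, then |λ + i/2| ≤ (3/10)√(5/6). -/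
open Real

/-- Howard-type semicircle localization for the Taylor–Green unstable eigenvalue on
`(Ev_x Ev_y)^[odd]_+`: under the listed inner-product hypotheses on `H`, `J`, the basis
vectors `E_{1,0}`, `E_{2,1}` and the normalized eigenfunction `f = E_{1,0} + f₊`, any
eigenvalue `μ` with `Re μ > 0` satisfies `|μ + i/2| ≤ (3/10)√(5/6)`. -/
theorem stmt_18 {X : Type*} [NormedAddCommGroup X] [InnerProductSpace ℂ X] [CompleteSpace X]
    (J H : X →ₗ[ℂ] X)
    (hJ : ∀ a b : X, (inner ℂ (J a) b : ℂ) = -inner ℂ a (J b))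
    (hH : ∀ a b : X, (inner ℂ (H a) b : ℂ) = inner ℂ a (H b))
    (E₁₀ E₂₁ f fp : X) (μ : ℂ)
    (hf : f = E₁₀ + fp)
    (hperp : (inner ℂ E₁₀ fp : ℂ) = 0)
    (hHf : (inner ℂ (H f) f : ℂ) = 0)
    (hHE10 : H E₁₀ = -E₁₀)
    (hHE10form : (inner ℂ (H E₁₀) E₁₀ : ℂ) = -(4 * (Real.pi : ℂ) ^ 2))
    (hHfp : 3 / 5 * ‖fp‖ ^ 2 ≤ ((inner ℂ (H fp) fp : ℂ)).re)
    (hJE10 : J E₁₀ = (Complex.I / 2) • E₁₀ - (1 / 2 : ℂ) • E₂₁)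
    (hHE21 : H E₂₁ = (-(3 / 5) : ℂ) • E₂₁)
    (hnorm10 : ‖E₁₀‖ ^ 2 = 4 * Real.pi ^ 2)
    (hnorm21 : ‖E₂₁‖ = Real.sqrt 2 * Real.pi)
    (heig : J (H f) = μ • f) (hre : 0 < μ.re) :
    ‖μ + Complex.I / 2‖ ≤ 3 / 10 * Real.sqrt (5 / 6) := by
  have hπ : (0:ℝ) < Real.pi := Real.pi_pos
  set c : ℂ := inner ℂ E₂₁ fp with hc
  -- orthogonality of the two eigenvectors
  have horth : (inner ℂ E₂₁ E₁₀ : ℂ) = 0 := by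
    have h := hH E₂₁ E₁₀
    rw [hHE21, hHE10, inner_smul_left, inner_neg_right] at h
    rw [show (starRingEnd ℂ) (-(3/5) : ℂ) = -(3/5) by simp [map_div₀, Complex.conj_ofNat]] at h
    linear_combination (5/2 : ℂ) * h
  have hfpE : (inner ℂ fp E₁₀ : ℂ) = 0 := by
    rw [← inner_conj_symm, hperp, map_zero]
  have hE10self : (inner ℂ E₁₀ E₁₀ : ℂ) = 4 * (Real.pi:ℂ)^2 := by
    have h := congrArg (fun r : ℝ => (r:ℂ)) hnorm10
    push_cast at h
    rw [inner_self_eq_norm_sq_to_K]; exact h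
  -- value of ⟨H f₊, f₊⟩
  have hA2 : (inner ℂ (H E₁₀) fp : ℂ) = 0 := by
    rw [hHE10, inner_neg_left, hperp, neg_zero]
  have hA3 : (inner ℂ (H fp) E₁₀ : ℂ) = 0 := by
    rw [hH, hHE10, inner_neg_right, hfpE, neg_zero]
  have hexp : (inner ℂ (H f) f : ℂ)
      = inner ℂ (H E₁₀) E₁₀ + inner ℂ (H E₁₀) fp + inner ℂ (H fp) E₁₀ + inner ℂ (H fp) fp := by
    rw [hf, map_add]
    simp only [inner_add_left, inner_add_right]
    ring
  have hHfpval : (inner ℂ (H fp) fp : ℂ) = 4 * (Real.pi:ℂ)^2 := by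
    have h := hHf
    rw [hexp, hHE10form, hA2, hA3] at h
    linear_combination h
  have hfpnorm : ‖fp‖^2 ≤ 20/3 * Real.pi^2 := by
    have hre2 : ((inner ℂ (H fp) fp : ℂ)).re = 4 * Real.pi^2 := by
      rw [hHfpval, show (4 * (Real.pi:ℂ)^2) = ((4 * Real.pi^2 : ℝ) : ℂ) by push_cast; ring,
        Complex.ofReal_re]
    linarith [hHfp, hre2 ▸ hHfp]
  -- main identity
  have hE10f : (inner ℂ E₁₀ f : ℂ) = 4 * (Real.pi:ℂ)^2 := by
    rw [hf, inner_add_right, hperp, add_zero, hE10self]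
  have hC1 : (inner ℂ E₁₀ (H f) : ℂ) = -(4 * (Real.pi:ℂ)^2) := by
    rw [← hH, hHE10, inner_neg_left, hE10f]
  have hC2 : (inner ℂ E₂₁ (H f) : ℂ) = -(3/5) * c := by
    rw [← hH, hHE21, inner_smul_left, hf, inner_add_right, horth, zero_add,
      show (starRingEnd ℂ) (-(3/5) : ℂ) = -(3/5) by simp [map_div₀, Complex.conj_ofNat]]
  have hB1 : (inner ℂ E₁₀ (J (H f)) : ℂ) = μ * (4 * (Real.pi:ℂ)^2) := by
    rw [heig, inner_smul_right, hE10f]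
  have hB3 : (inner ℂ (J E₁₀) (H f) : ℂ) = 2 * (Real.pi:ℂ)^2 * Complex.I + 3/10 * c := by
    rw [hJE10, inner_sub_left, inner_smul_left, inner_smul_left, hC1, hC2,
      show (starRingEnd ℂ) (Complex.I/2) = -(Complex.I/2) by simp [map_div₀, Complex.conj_ofNat, Complex.conj_I]; ring,
      show (starRingEnd ℂ) ((1:ℂ)/2) = 1/2 by simp [map_div₀, Complex.conj_ofNat]]
    ring
  have hmain : μ * (4 * (Real.pi:ℂ)^2)
      = -(2 * (Real.pi:ℂ)^2 * Complex.I + 3/10 * c) := by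
    have h := hJ E₁₀ (H f)
    rw [hB3, hB1] at h
    linear_combination h
  have key' : (40 * (Real.pi:ℂ)^2) * (μ + Complex.I/2) = -3 * c := by
    linear_combination 10 * hmain
  -- take absolute values
  set A : ℝ := ‖μ + Complex.I/2‖ with hA
  have habs : 40 * Real.pi^2 * A = 3 * ‖c‖ := by
    have h := congrArg (‖·‖) key'
    simp only [norm_mul, norm_pow, Complex.norm_real, Complex.norm_ofNat, Real.norm_eq_abs, sq_abs,
      norm_neg, _root_.abs_of_pos hπ] at h
    exact h
  have hcs : ‖c‖ ≤ Real.sqrt 2 * Real.pi * ‖fp‖ := by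
    have := norm_inner_le_norm (𝕜 := ℂ) E₂₁ fp
    rw [hnorm21] at this
    simpa using this
  -- finish
  have hc2 : (‖c‖)^2 ≤ 2 * Real.pi^2 * ‖fp‖^2 := by
    have h2 : Real.sqrt 2 ^ 2 = 2 := Real.sq_sqrt (by norm_num)
    nlinarith [norm_nonneg c, norm_nonneg fp, Real.sqrt_nonneg 2, hcs,
      mul_nonneg (mul_nonneg (Real.sqrt_nonneg 2) hπ.le) (norm_nonneg fp)]
  have habs2 : (40 * Real.pi^2 * A)^2 = (3 * ‖c‖)^2 := by rw [habs]
  have hA2' : A^2 ≤ 3/40 := by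
    nlinarith [habs2, hc2, hfpnorm, pow_pos hπ 2, pow_pos hπ 4,
      norm_nonneg c, sq_nonneg A, mul_pos (pow_pos hπ 2) (pow_pos hπ 2)]
  have hrhs : (3/10:ℝ) * Real.sqrt (5/6) = Real.sqrt (3/40) := by
    rw [show (3/40:ℝ) = (3/10)^2 * (5/6) by norm_num, Real.sqrt_mul (by positivity),
      Real.sqrt_sq (by norm_num)]
  rw [hrhs]
  exact (Real.le_sqrt (norm_nonneg _) (by norm_num)).mpr hA2'
end

section
/- For the (m,n) Taylor–Green vortex with 1 ≤ m ≤ n, the self-adjoint operator H = Id + (m²+n²)Δ⁻¹ restricted to the subspace spanned by {cos(j'mx)cos(k'ny) : j', k' ≥ 0, j'+k' odd} has negative directions exactly at cos(ny) together with cos(j'mx) for odd j' with (j'm)² < m²+n². If 4a - 1 < √(n²/m²+1) < 4a+1 for some positive integer a, the number of odd j' ≥ 1 with (j'm)² < m²+n² is exactly 2a, hence the total number of negative directions is the odd number 2a+1. -/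
/-- For the `(m,n)` Taylor–Green vortex with `1 ≤ m ≤ n`: on the subspace spanned by
`cos(j'mx)cos(k'ny)` with `j' + k'` odd, the multiplier `1 - (m²+n²)/((j'm)²+(k'n)²)` of
`H = Id + (m²+n²)Δ⁻¹` is negative exactly at `(j',k') = (0,1)` (the mode `cos(ny)`) and at
`k' = 0` with `j'` odd and `(j'm)² < m²+n²`. Moreover, if `4a-1 < √(n²/m²+1) < 4a+1` for a
positive integer `a`, then the number of odd `j'` with `(j'm)² < m²+n²` is exactly `2a`, so
the total number of negative directions is the odd number `2a+1`. -/
theorem stmt_19 (m n a : ℕ) (hm : 1 ≤ m) (hmn : m ≤ n) (ha : 1 ≤ a)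
    (hcond₁ : (4 * (a : ℝ) - 1) < Real.sqrt ((n : ℝ) ^ 2 / (m : ℝ) ^ 2 + 1))
    (hcond₂ : Real.sqrt ((n : ℝ) ^ 2 / (m : ℝ) ^ 2 + 1) < 4 * (a : ℝ) + 1) :
    (∀ j' k' : ℕ, Odd (j' + k') →
      ((1 - ((m : ℝ) ^ 2 + (n : ℝ) ^ 2) / (((j' * m : ℕ) : ℝ) ^ 2 + ((k' * n : ℕ) : ℝ) ^ 2) < 0)
        ↔ ((j' = 0 ∧ k' = 1) ∨ (k' = 0 ∧ Odd j' ∧ (j' * m) ^ 2 < m ^ 2 + n ^ 2))))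
    ∧ {j' : ℕ | Odd j' ∧ (j' * m) ^ 2 < m ^ 2 + n ^ 2}.ncard = 2 * a
    ∧ Odd (1 + {j' : ℕ | Odd j' ∧ (j' * m) ^ 2 < m ^ 2 + n ^ 2}.ncard) := by
  have hn : 1 ≤ n := le_trans hm hmn
  have hm0 : (0:ℝ) < (m:ℝ) := by exact_mod_cast hm
  -- key per-j equivalence
  have hX : ((n:ℝ)^2/(m:ℝ)^2+1) = ((m:ℝ)^2+(n:ℝ)^2)/(m:ℝ)^2 := by
    field_simp
    ring
  have hkey : ∀ j : ℕ, ((j * m) ^ 2 < m ^ 2 + n ^ 2 ↔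
      (j:ℝ) < Real.sqrt ((n:ℝ)^2/(m:ℝ)^2+1)) := by
    intro j
    rw [hX, Real.lt_sqrt (Nat.cast_nonneg j), lt_div_iff₀ (by positivity)]
    constructor
    · intro h
      have h' : (((j*m)^2 : ℕ) : ℝ) < ((m^2+n^2 : ℕ) : ℝ) := by exact_mod_cast h
      push_cast at h'
      nlinarith [h']
    · intro h
      have h' : (((j*m)^2 : ℕ) : ℝ) < ((m^2+n^2 : ℕ) : ℝ) := by push_cast; nlinarith [h]
      exact_mod_cast h'
  -- the set is the odd numbers below 4a
  have hset : {j' : ℕ | Odd j' ∧ (j' * m) ^ 2 < m ^ 2 + n ^ 2}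
      = ↑(Finset.image (fun i => 2 * i + 1) (Finset.range (2 * a))) := by
    ext j
    simp only [Set.mem_setOf_eq, Finset.coe_image, Set.mem_image, Finset.mem_coe,
      Finset.mem_range]
    constructor
    · rintro ⟨hoj, hlt⟩
      have h1 : (j:ℝ) < 4 * (a:ℝ) + 1 := lt_trans ((hkey j).mp hlt) hcond₂
      have h2 : j < 4 * a + 1 := by exact_mod_cast h1
      rw [Nat.odd_iff] at hoj
      exact ⟨j / 2, by omega, by omega⟩
    · rintro ⟨i, hi, rfl⟩
      refine ⟨⟨i, by ring⟩, (hkey _).mpr ?_⟩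
      have h1 : (2 * i + 1 : ℕ) + 1 ≤ 4 * a := by omega
      have h2 : ((2 * i + 1 : ℕ) : ℝ) + 1 ≤ 4 * (a:ℝ) := by exact_mod_cast h1
      linarith [hcond₁]
  refine ⟨?_, ?_, ?_⟩
  · intro j' k' hodd
    have hjk : j' ≠ 0 ∨ k' ≠ 0 := by
      rcases hodd with ⟨t, ht⟩; omega
    have hDn : 0 < (j' * m) ^ 2 + (k' * n) ^ 2 := by
      rcases hjk with h | h
      · have : 0 < j' * m := Nat.mul_pos (Nat.pos_of_ne_zero h) hm
        calc 0 < (j' * m) ^ 2 := pow_pos this 2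
          _ ≤ _ := Nat.le_add_right _ _
      · have : 0 < k' * n := Nat.mul_pos (Nat.pos_of_ne_zero h) hn
        have h2 : 0 < (k' * n) ^ 2 := pow_pos this 2
        omega
    have hD : (0:ℝ) < ((j' * m : ℕ) : ℝ) ^ 2 + ((k' * n : ℕ) : ℝ) ^ 2 := by
      exact_mod_cast hDn
    rw [sub_neg, one_lt_div hD]
    have hcast : (((j' * m : ℕ) : ℝ) ^ 2 + ((k' * n : ℕ) : ℝ) ^ 2 < (m:ℝ)^2 + (n:ℝ)^2)
        ↔ ((j' * m) ^ 2 + (k' * n) ^ 2 < m ^ 2 + n ^ 2) := by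
      constructor
      · intro h; exact_mod_cast h
      · intro h; exact_mod_cast h
    rw [hcast]
    constructor
    · intro h
      match k', hodd with
      | 0, hodd =>
        refine Or.inr ⟨rfl, ?_, ?_⟩
        · simpa using hodd
        · simpa using h
      | 1, hodd =>
        rcases Nat.eq_zero_or_pos j' with hj0 | hj1
        · exact Or.inl ⟨hj0, rfl⟩
        · exfalso
          have hje : Even j' := by
            rcases Nat.even_or_odd j' with he | ho
            · exact he
            · exfalso
              have : Even (j' + 1) := Odd.add_one ho
              exact (Nat.not_odd_iff_even.mpr this) hodd
          have hj2 : 2 ≤ j' := by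
            rw [Nat.even_iff] at hje; omega
          have : (2 * m) ^ 2 ≤ (j' * m) ^ 2 :=
            Nat.pow_le_pow_left (Nat.mul_le_mul_right m hj2) 2
          nlinarith [h, this, hmn, hm]
      | (k + 2), hodd =>
        exfalso
        have : (2 * n) ^ 2 ≤ ((k + 2) * n) ^ 2 :=
          Nat.pow_le_pow_left (Nat.mul_le_mul_right n (by omega)) 2
        nlinarith [h, this, hmn, hn]
    · rintro (⟨hj, hk⟩ | ⟨hk, _, hlt⟩)
      · subst hj; subst hk
        simp only [Nat.zero_mul, Nat.one_mul]
        nlinarith [hm]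
      · subst hk
        simpa using hlt
  · rw [hset, Set.ncard_coe_finset,
      Finset.card_image_of_injective _ (fun x y h => by omega), Finset.card_range]
  · rw [hset, Set.ncard_coe_finset,
      Finset.card_image_of_injective _ (fun x y h => by omega), Finset.card_range]
    exact ⟨a, by ring⟩
end
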